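/- Let H be a d×d real symmetric matrix with 0 ⪯ γH ⪯ I for some γ > 0, and let σ² ≥ 0. Suppose C₀ = 0 and, for each t ≥ 1, C_t is a symmetric matrix with C_t ⪰ (I − γH)·C_{t−1}·(I − γH) + γ²σ²H. Then for every t ≥ 0, C_t ⪰ (γσ²/2)·(I − (I − γH)^{2t}). -/

import Mathlib

lemma psd_smul {n : ℕ} {A : Matrix (Fin n) (Fin n) ℝ} (hA : A.PosSemidef)
    {c : ℝ} (hc : 0 ≤ c) : (c • A).PosSemidef := by
  refine ⟨?_, fun x => ?_⟩
  · unfold Matrix.IsHermitian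
    rw [Matrix.conjTranspose_smul, hA.1.eq]
    simp
  · exact (hA.smul hc).2 x

/-- Variance lower bound: if `0 ⪯ γH ⪯ I`, `C₀ = 0` and
`C_{t+1} ⪰ (I−γH) C_t (I−γH) + γ²σ²H`, then `C_t ⪰ (γσ²/2)(I − (I−γH)^{2t})`. -/
theorem variance_lower_bound {d : ℕ}
    (H : Matrix (Fin d) (Fin d) ℝ) (hH : H.IsHermitian)
    (γ : ℝ) (hγ : 0 < γ)
    (hpos : (γ • H).PosSemidef)
    (hle : ((1 : Matrix (Fin d) (Fin d) ℝ) - γ • H).PosSemidef)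
    (σ2 : ℝ) (hσ : 0 ≤ σ2)
    (C : ℕ → Matrix (Fin d) (Fin d) ℝ)
    (hC0 : C 0 = 0)
    (hCsymm : ∀ t, (C t).IsHermitian)
    (hCrec : ∀ t, (C (t + 1)
      - (((1 : Matrix (Fin d) (Fin d) ℝ) - γ • H) * C t *
          ((1 : Matrix (Fin d) (Fin d) ℝ) - γ • H) + (γ ^ 2 * σ2) • H)).PosSemidef) :
    ∀ t, (C t - (γ * σ2 / 2) • ((1 : Matrix (Fin d) (Fin d) ℝ)
        - ((1 : Matrix (Fin d) (Fin d) ℝ) - γ • H) ^ (2 * t))).PosSemidef := by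
  set B : Matrix (Fin d) (Fin d) ℝ := (1 : Matrix (Fin d) (Fin d) ℝ) - γ • H with hB
  have hBH : B.IsHermitian := hle.1
  intro t
  induction t with
  | zero => simpa [hC0] using Matrix.PosSemidef.zero
  | succ t ih =>
    have hHH : (H * H).PosSemidef := by
      have := Matrix.posSemidef_conjTranspose_mul_self H
      rwa [hH.eq] at this
    have hmid : (B * (C t - (γ * σ2 / 2) • (1 - B ^ (2 * t))) * B).PosSemidef := by
      have := ih.mul_mul_conjTranspose_same B
      rwa [hBH.eq] at this
    have key : C (t + 1) - (γ * σ2 / 2) • (1 - B ^ (2 * (t + 1)))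
        = (C (t + 1) - (B * C t * B + (γ ^ 2 * σ2) • H))
          + (B * (C t - (γ * σ2 / 2) • (1 - B ^ (2 * t))) * B
            + (γ ^ 3 * σ2 / 2) • (H * H)) := by
      have hpow : B ^ (2 * (t + 1)) = B * B ^ (2 * t) * B := by
        rw [show 2 * (t + 1) = 1 + 2 * t + 1 by ring]
        rw [pow_add, pow_add, pow_one]
      have hB2 : B * B = 1 - (2 * γ) • H + (γ * γ) • (H * H) := by
        rw [hB]
        simp only [mul_sub, sub_mul, one_mul, mul_one, Matrix.smul_mul, Matrix.mul_smul,
          smul_smul, two_mul]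
        module
      rw [hpow]
      simp only [Matrix.mul_sub, Matrix.sub_mul, Matrix.mul_smul, Matrix.smul_mul,
        Matrix.mul_one, Matrix.one_mul, smul_sub, hB2]
      module
    rw [key]
    exact (hCrec t).add (hmid.add (psd_smul hHH (by positivity)))
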